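/- Let d ≥ 1 and equip ℝ^d with the sup norm ‖v‖∞ = max_i |v_i|. Let α, β > 0 satisfy α·(5β + 6) ≤ 2 and let φ ∈ [0,1]. For k = 1, 2, let f_z^k, f_r^k, f_c^k : ℝ^d → ℝ^d be 1-Lipschitz maps, and define h^k(x) = (α·σ(f_z^k(x))) ⊙ (tanh(f_c^k((β·σ(f_r^k(x))) ⊙ x)) − x), where σ(u) = 1/(1 + exp(−u)) and tanh are applied coordinatewise. Let g : ℝ^d → ℝ^d be a 1-Lipschitz map that sends the closed unit ball {x : ‖x‖∞ ≤ 1} into itself. Then the map F(x) = x + φ·(h¹(x) ⊙ h²(g(x))) is injective on the closed unit ball {x ∈ ℝ^d : ‖x‖∞ ≤ 1}. -/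

import Mathlib

/-- The logistic (sigmoid) function. -/
noncomputable def sigmoid (u : ℝ) : ℝ := 1 / (1 + Real.exp (-u))

/-- The GRU-flow update `h(x) = z(x) ⊙ (c(x) − x)` with
`z(x) = α·σ(f_z(x))`, `r(x) = β·σ(f_r(x))`, `c(x) = tanh(f_c(r(x) ⊙ x))`,
where `σ` and `tanh` act coordinatewise and `⊙` is the coordinatewise product. -/
noncomputable def gruH {d : ℕ} (α β : ℝ) (fz fr fc : (Fin d → ℝ) → (Fin d → ℝ))
    (x : Fin d → ℝ) : Fin d → ℝ :=
  fun i =>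
    (α * sigmoid (fz x i)) *
      (Real.tanh (fc (fun j => (β * sigmoid (fr x j)) * x j) i) - x i)

lemma sigmoid_mem (u : ℝ) : 0 ≤ sigmoid u ∧ sigmoid u ≤ 1 := by
  have h := Real.exp_pos (-u)
  unfold sigmoid
  constructor
  · positivity
  · rw [div_le_one (by linarith)]; linarith

lemma hasDerivAt_sigmoid (u : ℝ) :
    HasDerivAt sigmoid (Real.exp (-u) / (1 + Real.exp (-u)) ^ 2) u := by
  have h0 : (1 : ℝ) + Real.exp (-u) ≠ 0 := by positivity
  have h1 : HasDerivAt (fun v : ℝ => 1 + Real.exp (-v)) (Real.exp (-u) * (-1)) u := by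
    exact (((Real.hasDerivAt_exp (-u)).comp u (hasDerivAt_neg u))).const_add 1
  have h2 := h1.inv h0
  have : sigmoid = fun v : ℝ => (1 + Real.exp (-v))⁻¹ := by
    funext v; rw [sigmoid, one_div]
  rw [this]
  exact h2.congr_deriv (by ring)

lemma sigmoid_lipschitz (a b : ℝ) : |sigmoid a - sigmoid b| ≤ (1 / 4) * |a - b| := by
  have h := Convex.norm_image_sub_le_of_norm_hasDerivWithin_le
    (f := sigmoid) (f' := fun u => Real.exp (-u) / (1 + Real.exp (-u)) ^ 2)
    (s := Set.univ) (C := 1 / 4)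
    (fun x _ => (hasDerivAt_sigmoid x).hasDerivWithinAt)
    (fun x _ => by
      have ht := Real.exp_pos (-x)
      rw [Real.norm_eq_abs, abs_of_nonneg (by positivity)]
      rw [div_le_iff₀ (by positivity)]
      nlinarith [sq_nonneg (1 - Real.exp (-x))])
    convex_univ (Set.mem_univ b) (Set.mem_univ a)
  simpa [Real.norm_eq_abs] using h

lemma abs_tanh_le (u : ℝ) : |Real.tanh u| ≤ 1 := by
  have hc := Real.cosh_pos u
  have hs := Real.cosh_sq u
  rw [Real.tanh_eq_sinh_div_cosh, abs_div, abs_of_pos hc, div_le_one hc]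
  rw [abs_le]
  constructor <;> nlinarith

lemma tanh_lipschitz (a b : ℝ) : |Real.tanh a - Real.tanh b| ≤ |a - b| := by
  have h := Convex.norm_image_sub_le_of_norm_hasDerivWithin_le
    (f := Real.tanh) (f' := fun u => 1 / Real.cosh u ^ 2)
    (s := Set.univ) (C := 1)
    (fun x _ => by
      have hc := (Real.cosh_pos x).ne'
      have h2 := (Real.hasDerivAt_sinh x).div (Real.hasDerivAt_cosh x) hc
      have he : Real.tanh = fun v => Real.sinh v / Real.cosh v := by
        funext v; rw [Real.tanh_eq_sinh_div_cosh]
      rw [he]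
      have := Real.cosh_sq x
      exact (h2.congr_deriv (by
        rw [show Real.cosh x * Real.cosh x - Real.sinh x * Real.sinh x = 1 by nlinarith])).hasDerivWithinAt
    )
    (fun x _ => by
      have hc := Real.one_le_cosh x
      rw [Real.norm_eq_abs, abs_of_nonneg (by positivity)]
      rw [div_le_one (by positivity)]
      nlinarith)
    convex_univ (Set.mem_univ b) (Set.mem_univ a)
  simpa [Real.norm_eq_abs] using h
lemma coord_le {d : ℕ} (x : Fin d → ℝ) (i : Fin d) : |x i| ≤ ‖x‖ := by
  simpa [Real.norm_eq_abs] using norm_le_pi_norm x i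

lemma lip_coord {d : ℕ} {f : (Fin d → ℝ) → (Fin d → ℝ)} (hf : LipschitzWith 1 f)
    (x y : Fin d → ℝ) (i : Fin d) : |f x i - f y i| ≤ ‖x - y‖ := by
  have h1 : |f x i - f y i| ≤ ‖f x - f y‖ := by
    simpa [Real.norm_eq_abs] using norm_le_pi_norm (f x - f y) i
  have h2 := hf.dist_le_mul x y
  simp only [dist_eq_norm, NNReal.coe_one, one_mul] at h2
  linarith

lemma prod_diff_bound (a a' b b' Ka Kb Ba Bb : ℝ)
    (h1 : |a - a'| ≤ Ka) (h2 : |b - b'| ≤ Kb) (h3 : |a| ≤ Ba) (h4 : |b'| ≤ Bb) :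
    |a * b - a' * b'| ≤ Ka * Bb + Ba * Kb := by
  have he : a * b - a' * b' = (a - a') * b' + a * (b - b') := by ring
  rw [he]
  calc |(a - a') * b' + a * (b - b')| ≤ |(a - a') * b'| + |a * (b - b')| := abs_add_le _ _
    _ = |a - a'| * |b'| + |a| * |b - b'| := by rw [abs_mul, abs_mul]
    _ ≤ Ka * Bb + Ba * Kb :=
        add_le_add (mul_le_mul h1 h4 (abs_nonneg _) ((abs_nonneg _).trans h1))
          (mul_le_mul h3 h2 (abs_nonneg _) ((abs_nonneg _).trans h3))

lemma gruH_bound {d : ℕ} (α β : ℝ) (hα : 0 ≤ α) (fz fr fc : (Fin d → ℝ) → (Fin d → ℝ))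
    (x : Fin d → ℝ) (hx : ‖x‖ ≤ 1) (i : Fin d) :
    |gruH α β fz fr fc x i| ≤ 2 * α := by
  rw [gruH, abs_mul]
  have h1 : |α * sigmoid (fz x i)| ≤ α := by
    rw [abs_mul, abs_of_nonneg hα, abs_of_nonneg (sigmoid_mem _).1]
    nlinarith [(sigmoid_mem (fz x i)).2]
  have h2 : |Real.tanh (fc (fun j => (β * sigmoid (fr x j)) * x j) i) - x i| ≤ 2 := by
    have := abs_tanh_le (fc (fun j => (β * sigmoid (fr x j)) * x j) i)
    have hxi : |x i| ≤ 1 := (coord_le x i).trans hx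
    calc |_ - x i| ≤ |Real.tanh _| + |x i| := abs_sub _ _
      _ ≤ 2 := by linarith
  calc |α * sigmoid (fz x i)| * |_| ≤ α * 2 :=
        mul_le_mul h1 h2 (abs_nonneg _) hα
    _ = 2 * α := by ring

lemma gruH_lip {d : ℕ} (α β : ℝ) (hα : 0 < α) (hβ : 0 < β)
    (fz fr fc : (Fin d → ℝ) → (Fin d → ℝ))
    (hfz : LipschitzWith 1 fz) (hfr : LipschitzWith 1 fr) (hfc : LipschitzWith 1 fc)
    (x y : Fin d → ℝ) (hx : ‖x‖ ≤ 1) (hy : ‖y‖ ≤ 1) (i : Fin d) :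
    |gruH α β fz fr fc x i - gruH α β fz fr fc y i| ≤ α * (5 * β + 6) / 4 * ‖x - y‖ := by
  set D := ‖x - y‖ with hD
  have hD0 : 0 ≤ D := norm_nonneg _
  set u : Fin d → ℝ := fun j => (β * sigmoid (fr x j)) * x j with hu
  set v : Fin d → ℝ := fun j => (β * sigmoid (fr y j)) * y j with hv
  -- coordinate differences
  have hxyj : ∀ j, |x j - y j| ≤ D := by
    intro j
    simpa [Real.norm_eq_abs] using norm_le_pi_norm (x - y) j
  -- z part
  have hz : |α * sigmoid (fz x i) - α * sigmoid (fz y i)| ≤ α / 4 * D := by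
    have h1 : α * sigmoid (fz x i) - α * sigmoid (fz y i)
        = α * (sigmoid (fz x i) - sigmoid (fz y i)) := by ring
    rw [h1, abs_mul, abs_of_pos hα]
    have h2 := sigmoid_lipschitz (fz x i) (fz y i)
    have h3 := lip_coord hfz x y i
    nlinarith
  -- r⊙x part
  have huv : ‖u - v‖ ≤ 5 * β / 4 * D := by
    rw [pi_norm_le_iff_of_nonneg (by positivity)]
    intro j
    have hs := sigmoid_lipschitz (fr x j) (fr y j)
    have hrc := lip_coord hfr x y j
    have hxj : |x j| ≤ 1 := (coord_le x j).trans hx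
    have hd1 : |sigmoid (fr x j) - sigmoid (fr y j)| ≤ (1 / 4) * D := by linarith
    have hsy := sigmoid_mem (fr y j)
    have hkey : |u j - v j| ≤ 5 * β / 4 * D := by
      have he : u j - v j
          = β * (sigmoid (fr x j) - sigmoid (fr y j)) * x j
            + β * sigmoid (fr y j) * (x j - y j) := by
        simp only [hu, hv]; ring
      rw [he]
      calc |β * (sigmoid (fr x j) - sigmoid (fr y j)) * x j
            + β * sigmoid (fr y j) * (x j - y j)|
          ≤ |β * (sigmoid (fr x j) - sigmoid (fr y j)) * x j|
            + |β * sigmoid (fr y j) * (x j - y j)| := abs_add_le _ _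
        _ = β * |sigmoid (fr x j) - sigmoid (fr y j)| * |x j|
            + β * |sigmoid (fr y j)| * |x j - y j| := by
            rw [abs_mul, abs_mul, abs_mul, abs_mul, abs_of_pos hβ]
        _ ≤ 5 * β / 4 * D := by
            have h4 := hxyj j
            have h5 : |sigmoid (fr y j)| ≤ 1 := by
              rw [abs_of_nonneg hsy.1]; exact hsy.2
            have t1 : β * |sigmoid (fr x j) - sigmoid (fr y j)| * |x j|
                ≤ β * (1 / 4 * D) * 1 :=
              mul_le_mul (mul_le_mul le_rfl hd1 (abs_nonneg _) hβ.le) hxj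
                (abs_nonneg _) (by positivity)
            have t2 : β * |sigmoid (fr y j)| * |x j - y j| ≤ β * 1 * D :=
              mul_le_mul (mul_le_mul le_rfl h5 (abs_nonneg _) hβ.le) h4
                (abs_nonneg _) (by positivity)
            linarith
    simpa [Real.norm_eq_abs] using hkey
  -- c part
  have hc : |Real.tanh (fc u i) - Real.tanh (fc v i)| ≤ 5 * β / 4 * D := by
    have h1 := tanh_lipschitz (fc u i) (fc v i)
    have h2 := lip_coord hfc u v i
    linarith
  -- assemble
  have hb' : |Real.tanh (fc v i) - y i| ≤ 2 := by
    have := abs_tanh_le (fc v i)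
    have hyi : |y i| ≤ 1 := (coord_le y i).trans hy
    calc |Real.tanh (fc v i) - y i| ≤ |Real.tanh (fc v i)| + |y i| := abs_sub _ _
      _ ≤ 2 := by linarith
  have ha : |α * sigmoid (fz x i)| ≤ α := by
    rw [abs_mul, abs_of_pos hα, abs_of_nonneg (sigmoid_mem _).1]
    nlinarith [(sigmoid_mem (fz x i)).2]
  have hbb : |(Real.tanh (fc u i) - x i) - (Real.tanh (fc v i) - y i)|
      ≤ (5 * β / 4 + 1) * D := by
    have h1 := hxyj i
    calc |(Real.tanh (fc u i) - x i) - (Real.tanh (fc v i) - y i)|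
        = |(Real.tanh (fc u i) - Real.tanh (fc v i)) - (x i - y i)| := by ring_nf
      _ ≤ |Real.tanh (fc u i) - Real.tanh (fc v i)| + |x i - y i| := abs_sub _ _
      _ ≤ (5 * β / 4 + 1) * D := by linarith
  have hmain := prod_diff_bound (α * sigmoid (fz x i)) (α * sigmoid (fz y i))
    (Real.tanh (fc u i) - x i) (Real.tanh (fc v i) - y i)
    (α / 4 * D) ((5 * β / 4 + 1) * D) α 2 hz hbb ha hb'
  have he : gruH α β fz fr fc x i - gruH α β fz fr fc y i
      = (α * sigmoid (fz x i)) * (Real.tanh (fc u i) - x i)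
        - (α * sigmoid (fz y i)) * (Real.tanh (fc v i) - y i) := by
    rw [gruH, gruH]
  rw [he]
  nlinarith [hmain]

/-- Invertibility of the graph-conditioned GRU flow: if `α(5β + 6) ≤ 2`, `φ ∈ [0,1]`,
the maps `f_z^k, f_r^k, f_c^k` are `1`-Lipschitz, and the graph encoder `g` is
`1`-Lipschitz and maps the closed sup-norm unit ball into itself, then
`F(x) = x + φ·(h¹(x) ⊙ h²(g(x)))` is injective on the closed unit ball. -/
theorem gru_flow_injective_on_unit_ball {d : ℕ} (hd : 1 ≤ d) (α β : ℝ)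
    (hα : 0 < α) (hβ : 0 < β) (hαβ : α * (5 * β + 6) ≤ 2)
    (φ : ℝ) (hφ : φ ∈ Set.Icc (0 : ℝ) 1)
    (fz1 fr1 fc1 fz2 fr2 fc2 : (Fin d → ℝ) → (Fin d → ℝ))
    (hfz1 : LipschitzWith 1 fz1) (hfr1 : LipschitzWith 1 fr1) (hfc1 : LipschitzWith 1 fc1)
    (hfz2 : LipschitzWith 1 fz2) (hfr2 : LipschitzWith 1 fr2) (hfc2 : LipschitzWith 1 fc2)
    (g : (Fin d → ℝ) → (Fin d → ℝ)) (hg : LipschitzWith 1 g)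
    (hgball : ∀ x : Fin d → ℝ, ‖x‖ ≤ 1 → ‖g x‖ ≤ 1) :
    Set.InjOn
      (fun x : Fin d → ℝ =>
        x + φ • fun i => gruH α β fz1 fr1 fc1 x i * gruH α β fz2 fr2 fc2 (g x) i)
      {x : Fin d → ℝ | ‖x‖ ≤ 1} := by

  rcases hφ with ⟨hφ0, hφ1⟩
  intro x hx y hy hF
  simp only [Set.mem_setOf_eq] at hx hy
  have hgxy : ‖g x - g y‖ ≤ ‖x - y‖ := by
    have := hg.dist_le_mul x y
    simpa [dist_eq_norm] using this
  set D := ‖x - y‖ with hD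
  have hD0 : 0 ≤ D := norm_nonneg _
  have key : ∀ i, |x i - y i| ≤ 2 * α * D := by
    intro i
    have hFi := congrFun hF i
    simp only [Pi.add_apply, Pi.smul_apply, smul_eq_mul] at hFi
    have hQ : |gruH α β fz1 fr1 fc1 x i * gruH α β fz2 fr2 fc2 (g x) i
        - gruH α β fz1 fr1 fc1 y i * gruH α β fz2 fr2 fc2 (g y) i| ≤ 2 * α * D := by
      have ha := gruH_lip α β hα hβ fz1 fr1 fc1 hfz1 hfr1 hfc1 x y hx hy i
      have hb := gruH_lip α β hα hβ fz2 fr2 fc2 hfz2 hfr2 hfc2 (g x) (g y)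
        (hgball x hx) (hgball y hy) i
      have hba := gruH_bound α β hα.le fz1 fr1 fc1 x hx i
      have hbb := gruH_bound α β hα.le fz2 fr2 fc2 (g y) (hgball y hy) i
      have hb' : |gruH α β fz2 fr2 fc2 (g x) i - gruH α β fz2 fr2 fc2 (g y) i|
          ≤ α * (5 * β + 6) / 4 * D := by
        have h3 : α * (5 * β + 6) / 4 * ‖g x - g y‖ ≤ α * (5 * β + 6) / 4 * D :=
          mul_le_mul_of_nonneg_left hgxy (by positivity)
        linarith
      have hp := prod_diff_bound (gruH α β fz1 fr1 fc1 x i) (gruH α β fz1 fr1 fc1 y i)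
        (gruH α β fz2 fr2 fc2 (g x) i) (gruH α β fz2 fr2 fc2 (g y) i)
        (α * (5 * β + 6) / 4 * D) (α * (5 * β + 6) / 4 * D) (2 * α) (2 * α)
        ha hb' hba hbb
      have hLD : α * (5 * β + 6) / 4 * D ≤ 1 / 2 * D :=
        mul_le_mul_of_nonneg_right (by linarith) hD0
      nlinarith [mul_le_mul_of_nonneg_left hLD hα.le]
    have heq : x i - y i
        = φ * (gruH α β fz1 fr1 fc1 y i * gruH α β fz2 fr2 fc2 (g y) i
            - gruH α β fz1 fr1 fc1 x i * gruH α β fz2 fr2 fc2 (g x) i) := by linarith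
    rw [heq, abs_mul, abs_of_nonneg hφ0, abs_sub_comm]
    nlinarith [abs_nonneg (gruH α β fz1 fr1 fc1 x i * gruH α β fz2 fr2 fc2 (g x) i
        - gruH α β fz1 fr1 fc1 y i * gruH α β fz2 fr2 fc2 (g y) i)]
  have hDle : D ≤ 2 * α * D := by
    rw [hD, pi_norm_le_iff_of_nonneg (by positivity)]
    intro i
    simpa [Real.norm_eq_abs] using key i
  have hDz : D ≤ 0 := by nlinarith
  exact sub_eq_zero.mp (norm_le_zero_iff.mp hDz)
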